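/- Let (S,+) be a dense subsemigroup of ((0,∞),+), let p be an idempotent ultrafilter in 0⁺, and let A ∈ p. Then there exists a sequence ⟨x_n⟩_{n=1}^∞ in S with x_n < 1/n for all n such that FS(⟨x_n⟩_{n=1}^∞) = {Σ_{n∈F} x_n : F ∈ 𝒫_f(ℕ)} ⊆ A. -/
import Mathlib


attribute [local instance] Ultrafilter.add

/-- The "star" of a set relative to an ultrafilter `p`:
elements of `B` whose translate set is still large. -/
def fsStar (p : Ultrafilter ℝ) (B : Set ℝ) : Set ℝ :=
  {x | x ∈ B ∧ {y | x + y ∈ B} ∈ p}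

lemma fsStar_subset (p : Ultrafilter ℝ) (B : Set ℝ) : fsStar p B ⊆ B :=
  fun _ hx => hx.1

lemma fsStar_mem (p : Ultrafilter ℝ) (hidem : p + p = p) {B : Set ℝ} (hB : B ∈ p) :
    fsStar p B ∈ p := by
  have h1 : B ∈ p + p := by rw [hidem]; exact hB
  have h2 : (∀ᶠ x in ↑(p + p), x ∈ B) := h1
  rw [Ultrafilter.eventually_add] at h2
  have h3 : {x | {y | x + y ∈ B} ∈ p} ∈ p := h2
  exact Filter.inter_mem hB h3

lemma fsStar_shift (p : Ultrafilter ℝ) (hidem : p + p = p) {B : Set ℝ}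
    {x : ℝ} (hx : x ∈ fsStar p B) : {y | x + y ∈ fsStar p B} ∈ p := by
  have h1 : {y | x + y ∈ B} ∈ p := hx.2
  have h2 : fsStar p {y | x + y ∈ B} ∈ p := fsStar_mem p hidem h1
  refine Filter.mem_of_superset h2 ?_
  rintro y ⟨hy1, hy2⟩
  refine ⟨hy1, ?_⟩
  have : {z | y + z ∈ {w | x + w ∈ B}} = {z | x + y + z ∈ B} := by
    ext z; simp [add_assoc]
  rwa [this] at hy2

/-- Finite sums theorem near zero: if `S` is a dense subsemigroup of `((0,∞),+)`,
`p` is an idempotent ultrafilter in `0⁺` (concentrated on `S`), and `A ∈ p`, then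
there is a sequence `⟨x_n⟩_{n≥1}` in `S` with `x_n < 1/n` whose finite sums all lie
in `A`. -/
theorem finite_sums_near_zero (S : Set ℝ)
    (hSpos : ∀ x ∈ S, 0 < x)
    (hSadd : ∀ x ∈ S, ∀ y ∈ S, x + y ∈ S)
    (hSdense : ∀ a b : ℝ, 0 ≤ a → a < b → ∃ s ∈ S, s ∈ Set.Ioo a b)
    (p : Ultrafilter ℝ) (hidem : p + p = p)
    (hzero : ∀ ε : ℝ, 0 < ε → {x | x ∈ S ∧ x < ε} ∈ p)
    (A : Set ℝ) (hAS : A ⊆ S) (hA : A ∈ p) :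
    ∃ x : ℕ → ℝ,
      (∀ n : ℕ, 1 ≤ n → x n ∈ S ∧ x n < 1 / n) ∧
      (∀ F : Finset ℕ, F.Nonempty → (∀ n ∈ F, 1 ≤ n) → ∑ n ∈ F, x n ∈ A) := by
  classical
  -- step: from a large set B at stage n, extract a point and a new large set
  have step : ∀ (n : ℕ) (B : Set ℝ), ∃ (x : ℝ) (C : Set ℝ),
      B ∈ p → (C ∈ p ∧ x ∈ S ∧ x < 1 / (n + 1 : ℕ) ∧ x ∈ fsStar p B ∧
        C ⊆ fsStar p B ∧ ∀ y ∈ C, x + y ∈ fsStar p B) := by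
    intro n B
    by_cases hB : B ∈ p
    · have hstar : fsStar p B ∈ p := fsStar_mem p hidem hB
      have hsmall : {x | x ∈ S ∧ x < 1 / (n + 1 : ℕ)} ∈ p := by
        apply hzero
        positivity
      have hmem : fsStar p B ∩ {x | x ∈ S ∧ x < 1 / (n + 1 : ℕ)} ∈ p :=
        Filter.inter_mem hstar hsmall
      obtain ⟨x, hx1, hx2, hx3⟩ := Ultrafilter.nonempty_of_mem hmem
      refine ⟨x, fsStar p B ∩ {y | x + y ∈ fsStar p B}, fun _ => ?_⟩
      refine ⟨Filter.inter_mem hstar (fsStar_shift p hidem hx1), hx2, hx3, hx1,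
        fun y hy => hy.1, fun y hy => hy.2⟩
    · exact ⟨0, ∅, fun h => absurd h hB⟩
  choose xf Cf hstep using step
  -- the decreasing sequence of large sets
  let B : ℕ → Set ℝ := fun n => Nat.rec A (fun k Bk => Cf k Bk) n
  have hB0 : B 0 = A := rfl
  have hBsucc : ∀ n, B (n + 1) = Cf n (B n) := fun n => rfl
  have hBp : ∀ n, B n ∈ p := by
    intro n
    induction n with
    | zero => exact hA
    | succ k ih => exact ((hstep k (B k) ih).1)
  set x : ℕ → ℝ := fun n => xf (n - 1) (B (n - 1)) with hxdef
  have hprops : ∀ n : ℕ, 1 ≤ n →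
      x n ∈ S ∧ x n < 1 / n ∧ x n ∈ fsStar p (B (n - 1)) ∧
      B n ⊆ fsStar p (B (n - 1)) ∧ ∀ y ∈ B n, x n + y ∈ fsStar p (B (n - 1)) := by
    intro n hn
    obtain ⟨m, rfl⟩ := Nat.exists_eq_add_of_le hn
    have hm : 1 + m - 1 = m := by omega
    have h := hstep m (B m) (hBp m)
    have hBe : B (1 + m) = Cf m (B m) := by
      rw [Nat.add_comm]
    refine ⟨?_, ?_, ?_, ?_, ?_⟩
    · simpa [hxdef, hm] using h.2.1
    · have := h.2.2.1
      simpa [hxdef, hm, Nat.add_comm 1 m] using this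
    · simpa [hxdef, hm] using h.2.2.2.1
    · rw [hBe, hm]; exact h.2.2.2.2.1
    · rw [hBe]; simpa [hxdef, hm] using h.2.2.2.2.2
  -- monotonicity of B
  have hBmono : ∀ m n : ℕ, m ≤ n → B n ⊆ B m := by
    intro m n hmn
    induction n with
    | zero =>
      have : m = 0 := by omega
      subst this; exact subset_rfl
    | succ k ih =>
      rcases Nat.lt_or_ge m (k + 1) with h | h
      · have h1 : B (k + 1) ⊆ B k := by
          have := (hprops (k + 1) (by omega)).2.2.2.1
          simp only [Nat.add_sub_cancel] at this
          exact this.trans (fsStar_subset p (B k))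
        exact h1.trans (ih (by omega))
      · have : m = k + 1 := by omega
        subst this; exact subset_rfl
  have hBA : ∀ n, B n ⊆ A := fun n => hB0 ▸ hBmono 0 n (Nat.zero_le n)
  refine ⟨x, fun n hn => ⟨(hprops n hn).1, (hprops n hn).2.1⟩, ?_⟩
  -- key claim : finite sums land in fsStar of B (min - 1)
  have key : ∀ F : Finset ℕ, ∀ hF : F.Nonempty, (∀ n ∈ F, 1 ≤ n) →
      ∑ n ∈ F, x n ∈ fsStar p (B (F.min' hF - 1)) := by
    intro F
    induction F using Finset.strongInduction with
    | _ F ih =>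
      intro hF hge
      set m := F.min' hF with hm
      have hmF : m ∈ F := F.min'_mem hF
      have hm1 : 1 ≤ m := hge m hmF
      by_cases hsing : F = {m}
      · have hsum : ∑ n ∈ F, x n = x m := by rw [hsing, Finset.sum_singleton]
        rw [hsum]
        exact (hprops m hm1).2.2.1
      · have hF' : (F.erase m).Nonempty := by
          rw [Finset.nonempty_iff_ne_empty]
          intro h
          apply hsing
          apply Finset.eq_singleton_iff_unique_mem.mpr
          refine ⟨hmF, fun y hy => ?_⟩
          by_contra hy2
          exact Finset.notMem_empty y (h ▸ Finset.mem_erase.mpr ⟨hy2, hy⟩)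
        have hsub : F.erase m ⊂ F := Finset.erase_ssubset hmF
        have hge' : ∀ n ∈ F.erase m, 1 ≤ n := fun n hn => hge n (Finset.mem_of_mem_erase hn)
        have ihs := ih (F.erase m) hsub hF' hge'
        set m' := (F.erase m).min' hF' with hm'
        have hm'F : m' ∈ F.erase m := (F.erase m).min'_mem hF'
        have hmm' : m + 1 ≤ m' := by
          have h1 : m ≤ m' := F.min'_le m' (Finset.mem_of_mem_erase hm'F)
          have h2 : m' ≠ m := (Finset.mem_erase.mp hm'F).1
          omega
        -- the tail sum lies in B m
        have htail : ∑ n ∈ F.erase m, x n ∈ B m := by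
          have h1 : fsStar p (B (m' - 1)) ⊆ B (m' - 1) := fsStar_subset p _
          have h2 : B (m' - 1) ⊆ B m := hBmono m (m' - 1) (by omega)
          exact h2 (h1 ihs)
        have := (hprops m hm1).2.2.2.2 _ htail
        rwa [Finset.add_sum_erase F x hmF] at this
  intro F hF hge
  have h := key F hF hge
  exact hBA _ (fsStar_subset p _ h)
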